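/- arXiv:2509.12054 — 3 statements merged into one kernel-verified Lean document; each statement's English description precedes it below -/
import Mathlib

section
/- For 2^{n-1} ≤ k < 2^n, the Walsh–Fourier coefficient of the truncated kernel satisfies \hatφ_s^n(k) = 2^{n(s-1)}(1 - 2^{-s}) > 0. -/
open MeasureTheory Filter Topology
open scoped ENNReal Classical

/-- The Cantor dyadic group: sequences of 0s and 1s with coordinatewise addition mod 2. -/
abbrev G : Type := ℕ → ZMod 2

/-- The metric ρ(x,y) = ∑_{i=1}^∞ 2^{-i} |x_i - y_i| (coordinates indexed from 0 here). -/
noncomputable def rho (x y : G) : ℝ :=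
  ∑' i : ℕ, (2:ℝ) ^ (-(i:ℝ) - 1) * (if x i = y i then 0 else 1)

/-- The subgroup G_n of sequences vanishing in the first n coordinates. -/
def Gset (n : ℕ) : Set G := {x | ∀ i < n, x i = 0}

/-- The coset K_n(x) = x + G_n of G_n containing x. -/
def Kset (n : ℕ) (x : G) : Set G := {y | x - y ∈ Gset n}

/-- The k-th Walsh function. -/
def walsh (k : ℕ) (x : G) : ℝ :=
  ∏ i ∈ Finset.range k, if k.testBit i ∧ x i = 1 then (-1 : ℝ) else 1

/-- The s-kernel: φ_s(0) = 0 and φ_s(x) = 2^{s(n-1)} for x ∈ G_{n-1} \ G_n,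
i.e. 2^{s j} where j is the first nonzero coordinate of x. -/
noncomputable def kernel (s : ℝ) (x : G) : ℝ :=
  if h : ∃ i, x i ≠ 0 then (2:ℝ) ^ (s * (Nat.find h : ℝ)) else 0

/-- The truncated s-kernel φ_s^n. -/
noncomputable def kernelTrunc (s : ℝ) (n : ℕ) (x : G) : ℝ :=
  if x = 0 then 0 else if x ∈ Gset n then (2:ℝ) ^ (s * (n:ℝ)) else kernel s x

/-- Walsh–Fourier coefficient of the s-kernel w.r.t. a (Haar) measure lam. -/
noncomputable def phiHat (s : ℝ) (lam : Measure G) (k : ℕ) : ℝ :=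
  ∫ x, kernel s x * walsh k x ∂lam

/-- Walsh–Fourier coefficient of the truncated s-kernel. -/
noncomputable def phiHatTrunc (s : ℝ) (n : ℕ) (lam : Measure G) (k : ℕ) : ℝ :=
  ∫ x, kernelTrunc s n x * walsh k x ∂lam

/-- Walsh–Fourier coefficient of a measure μ. -/
noncomputable def muHat (μ : Measure G) (k : ℕ) : ℝ :=
  ∫ x, walsh k x ∂μ

/-- s-potential of μ at x. -/
noncomputable def potential (s : ℝ) (μ : Measure G) (x : G) : ℝ≥0∞ :=
  ∫⁻ y, ENNReal.ofReal (kernel s (x - y)) ∂μ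

/-- s-energy of μ. -/
noncomputable def energy (s : ℝ) (μ : Measure G) : ℝ≥0∞ :=
  ∫⁻ x, ∫⁻ y, ENNReal.ofReal (kernel s (x - y)) ∂μ ∂μ

/-- truncated s-energy of μ. -/
noncomputable def energyTrunc (s : ℝ) (n : ℕ) (μ : Measure G) : ℝ≥0∞ :=
  ∫⁻ x, ∫⁻ y, ENNReal.ofReal (kernelTrunc s n (x - y)) ∂μ ∂μ

/-- Diameter of a set in the metric ρ, valued in ℝ≥0∞. -/
noncomputable def diamRho (I : Set G) : ℝ≥0∞ :=
  ⨆ x ∈ I, ⨆ y ∈ I, ENNReal.ofReal (rho x y)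

/-- Pre-Hausdorff measure H^s_δ via countable covers of ρ-diameter < δ. -/
noncomputable def Hdelta (s : ℝ) (δ : ℝ≥0∞) (A : Set G) : ℝ≥0∞ :=
  ⨅ (I : ℕ → Set G) (_ : A ⊆ ⋃ i, I i) (_ : ∀ i, diamRho (I i) < δ),
    ∑' i, diamRho (I i) ^ s

/-- s-dimensional Hausdorff measure w.r.t. the metric ρ. -/
noncomputable def Hmeas (s : ℝ) (A : Set G) : ℝ≥0∞ :=
  ⨆ (δ : ℝ≥0∞) (_ : 0 < δ), Hdelta s δ A

/-- Hausdorff dimension w.r.t. the metric ρ. -/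
noncomputable def hdimRho (A : Set G) : ℝ≥0∞ :=
  ⨆ (t : ℝ) (_ : Hmeas t A = ⊤), ENNReal.ofReal t


namespace Aux

def eG (m : ℕ) : G := fun i => if i = m then 1 else 0

lemma measurable_walsh (k : ℕ) : Measurable (walsh k) := by
  unfold walsh
  apply Finset.measurable_prod
  intro i _
  apply Measurable.ite ?_ measurable_const measurable_const
  have : {x : G | k.testBit i ∧ x i = 1} = if k.testBit i then ((fun x : G => x i) ⁻¹' {1}) else ∅ := by
    split <;> ext x <;> simp [*]
  rw [this]
  split
  · exact (measurable_pi_apply i) (measurableSet_singleton 1)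
  · exact MeasurableSet.empty

lemma measurableSet_Gset (m : ℕ) : MeasurableSet (Gset m) := by
  have : Gset m = ⋂ i ∈ Set.Iio m, ((fun x : G => x i) ⁻¹' {0}) := by
    ext x; simp [Gset]
  rw [this]
  exact MeasurableSet.biInter (Set.to_countable _) fun i _ =>
    (measurable_pi_apply i) (measurableSet_singleton 0)

lemma measurable_addLeft (a : G) : Measurable (fun x : G => a + x) := by
  apply measurable_pi_lambda
  intro i
  exact (measurable_of_countable (fun c : ZMod 2 => a i + c)).comp (measurable_pi_apply i)

lemma walsh_abs_le (k : ℕ) (x : G) : ‖walsh k x‖ ≤ 1 := by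
  unfold walsh
  rw [Real.norm_eq_abs, Finset.abs_prod]
  calc ∏ i ∈ Finset.range k, |if k.testBit i ∧ x i = 1 then (-1:ℝ) else 1|
      ≤ ∏ i ∈ Finset.range k, 1 := by
        apply Finset.prod_le_prod (by intro i _; positivity)
        intro i _; split <;> simp
    _ = 1 := by simp

lemma integrable_walsh (k : ℕ) (lam : Measure G) [IsProbabilityMeasure lam] :
    Integrable (walsh k) lam := by
  apply Integrable.mono' (integrable_const (1:ℝ)) (measurable_walsh k).aestronglyMeasurable
  exact Filter.Eventually.of_forall (walsh_abs_le k)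

end Aux

namespace Aux

lemma preimage_addLeft (a : G) (S : Set G) : (fun x : G => a + x) ⁻¹' S = {x : G | a + x ∈ S} := rfl

lemma eG_preimage_Gset_succ (m : ℕ) :
    (fun x : G => eG m + x) ⁻¹' Gset (m+1) = Gset m \ Gset (m+1) := by
  ext x
  simp only [Set.mem_preimage, Set.mem_diff, Gset, Set.mem_setOf_eq, Pi.add_apply, eG]
  constructor
  · intro h
    refine ⟨fun i hi => ?_, fun h2 => ?_⟩
    · have := h i (by omega)
      simp only [if_neg (by omega : i ≠ m)] at this
      simpa using this
    · have h1 := h m (by omega)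
      have h2m := h2 m (by omega)
      rw [h2m] at h1
      simp at h1
  · rintro ⟨h1, h2⟩
    intro i hi
    rcases Nat.lt_or_ge i m with him | him
    · rw [if_neg (by omega : i ≠ m)]
      simpa using h1 i him
    · have hmi : m = i := by omega
      subst hmi
      rw [if_pos rfl]
      -- need x m = 1
      have hxm : x m ≠ 0 := by
        intro hxm
        exact h2 (fun j hj => by rcases Nat.lt_or_ge j m with hj' | hj'
                                 · exact h1 j hj'
                                 · have : j = m := by omega
                                   subst this; exact hxm)
      have : x m = 1 := by
        revert hxm; generalize x m = c; revert c; decide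
      rw [this]; decide

lemma eG_preimage_Gset (i m : ℕ) (him : m ≤ i) :
    (fun x : G => eG i + x) ⁻¹' Gset m = Gset m := by
  ext x
  simp only [Set.mem_preimage, Gset, Set.mem_setOf_eq, Pi.add_apply, eG]
  constructor <;> intro h j hj
  · have := h j hj
    rw [if_neg (by omega : j ≠ i)] at this
    simpa using this
  · rw [if_neg (by omega : j ≠ i)]
    simpa using h j hj

lemma lam_Gset (lam : Measure G) [IsProbabilityMeasure lam] [lam.IsAddLeftInvariant] (m : ℕ) :
    lam (Gset m) = 2⁻¹ ^ m := by
  induction m with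
  | zero =>
    have : Gset 0 = Set.univ := by ext x; simp [Gset]
    simp [this]
  | succ m ih =>
    have hmap : Measure.map (fun x : G => eG m + x) lam = lam :=
      Measure.IsAddLeftInvariant.map_add_left_eq_self (eG m)
    have h1 : lam (Gset m \ Gset (m+1)) = lam (Gset (m+1)) := by
      conv_rhs => rw [← hmap]
      rw [Measure.map_apply (measurable_addLeft (eG m)) (measurableSet_Gset (m+1))]
      rw [eG_preimage_Gset_succ]
    have hsub : Gset (m+1) ⊆ Gset m := fun x hx i hi => hx i (by omega)
    have h2 : lam (Gset m) = lam (Gset (m+1)) + lam (Gset m \ Gset (m+1)) := by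
      rw [← measure_union' disjoint_sdiff_self_right (measurableSet_Gset (m+1))]
      congr 1
      rw [Set.union_diff_cancel hsub]
    rw [h1, ih, ← two_mul] at h2
    have h3 : (2:ℝ≥0∞) * 2⁻¹ ^ (m+1) = 2⁻¹ ^ m := by
      rw [pow_succ, ← mul_assoc, mul_comm (2:ℝ≥0∞), mul_assoc,
        ENNReal.mul_inv_cancel (by norm_num) (by norm_num), mul_one]
    rw [← h3] at h2
    exact (ENNReal.mul_right_inj (by norm_num) (by norm_num)).mp h2.symm

lemma lam_singleton_zero (lam : Measure G) [IsProbabilityMeasure lam] [lam.IsAddLeftInvariant] :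
    lam {(0:G)} = 0 := by
  by_contra h
  obtain ⟨m, hm⟩ := ENNReal.exists_inv_two_pow_lt h
  have hsub : ({(0:G)} : Set G) ⊆ Gset m := by
    intro x hx; simp only [Set.mem_singleton_iff] at hx; subst hx
    intro i _; rfl
  have := measure_mono (μ := lam) hsub
  rw [lam_Gset lam m] at this
  exact hm.not_ge this

lemma walsh_flip (k i : ℕ) (hbit : k.testBit i) (x : G) :
    walsh k (eG i + x) = - walsh k x := by
  have hik : i < k := by
    by_contra h
    have hlt : k < 2 ^ i :=
      lt_of_lt_of_le (Nat.lt_two_pow_self (n := k)) (Nat.pow_le_pow_right (by norm_num) (by omega))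
    rw [Nat.testBit_lt_two_pow hlt] at hbit
    exact Bool.false_ne_true hbit
  have hmem : i ∈ Finset.range k := Finset.mem_range.mpr hik
  unfold walsh
  rw [← Finset.mul_prod_erase _ _ hmem, ← Finset.mul_prod_erase _ _ hmem]
  have hP : ∏ j ∈ (Finset.range k).erase i,
        (if k.testBit j ∧ (eG i + x) j = 1 then (-1:ℝ) else 1)
      = ∏ j ∈ (Finset.range k).erase i, (if k.testBit j ∧ x j = 1 then (-1:ℝ) else 1) := by
    apply Finset.prod_congr rfl
    intro j hj
    have hji : j ≠ i := Finset.ne_of_mem_erase hj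
    have hcoord : (eG i + x) j = x j := by
      simp [eG, Pi.add_apply, if_neg hji]
    rw [hcoord]
  rw [hP, ← neg_mul]
  congr 1
  have hx : x i = 0 ∨ x i = 1 := by
    have h01 : ∀ c : ZMod 2, c = 0 ∨ c = 1 := by decide
    exact h01 (x i)
  rcases hx with h | h
  · have hc : (eG i + x) i = 1 := by simp [eG, Pi.add_apply, h]
    rw [hc, if_pos ⟨hbit, rfl⟩, if_neg (by simp [h])]
  · have hc : (eG i + x) i = 0 := by
      simp only [Pi.add_apply, eG, if_pos rfl, h]
      decide
    rw [hc, if_neg (by simp), if_pos ⟨hbit, h⟩]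
    norm_num

lemma setIntegral_walsh_zero (lam : Measure G) [IsProbabilityMeasure lam]
    [lam.IsAddLeftInvariant] (k m i : ℕ) (hmi : m ≤ i) (hbit : k.testBit i) :
    ∫ x in Gset m, walsh k x ∂lam = 0 := by
  have hind : ∫ x in Gset m, walsh k x ∂lam
      = ∫ x, (Gset m).indicator (walsh k) x ∂lam :=
    (integral_indicator (measurableSet_Gset m)).symm
  have hmap : Measure.map (fun x : G => eG i + x) lam = lam :=
    Measure.IsAddLeftInvariant.map_add_left_eq_self (eG i)
  have hmeas : AEStronglyMeasurable ((Gset m).indicator (walsh k))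
      (Measure.map (fun x : G => eG i + x) lam) := by
    rw [hmap]
    exact ((measurable_walsh k).indicator (measurableSet_Gset m)).aestronglyMeasurable
  have hinv : ∫ x, (Gset m).indicator (walsh k) x ∂lam
      = ∫ x, (Gset m).indicator (walsh k) (eG i + x) ∂lam := by
    conv_lhs => rw [← hmap]
    exact integral_map (measurable_addLeft (eG i)).aemeasurable hmeas
  have hpt : ∀ x, (Gset m).indicator (walsh k) (eG i + x)
      = - (Gset m).indicator (walsh k) x := by
    intro x
    have hmemiff : eG i + x ∈ Gset m ↔ x ∈ Gset m := by
      constructor <;> intro hx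
      · have := Set.mem_preimage.mpr hx  -- x ∈ preimage
        rw [eG_preimage_Gset i m hmi] at this
        exact this
      · have : x ∈ (fun x : G => eG i + x) ⁻¹' Gset m := by
          rw [eG_preimage_Gset i m hmi]; exact hx
        exact this
    by_cases hx : x ∈ Gset m
    · rw [Set.indicator_of_mem (hmemiff.mpr hx), Set.indicator_of_mem hx,
        walsh_flip k i hbit x]
    · rw [Set.indicator_of_notMem (fun h => hx (hmemiff.mp h)),
        Set.indicator_of_notMem hx, neg_zero]
  have : ∫ x, (Gset m).indicator (walsh k) x ∂lam
      = - ∫ x, (Gset m).indicator (walsh k) x ∂lam := by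
    conv_lhs => rw [hinv]
    simp_rw [hpt]
    exact integral_neg _
  rw [hind]
  linarith

lemma walsh_eq_one_on_Gset {k n : ℕ} (hk2 : k < 2 ^ n) {x : G} (hx : x ∈ Gset n) :
    walsh k x = 1 := by
  unfold walsh
  apply Finset.prod_eq_one
  intro i _
  rw [if_neg]
  rintro ⟨hbit, hxi⟩
  by_cases hin : i < n
  · rw [hx i hin] at hxi
    exact absurd hxi (by decide)
  · have hlt : k < 2 ^ i := lt_of_lt_of_le hk2 (Nat.pow_le_pow_right (by norm_num) (by omega))
    rw [Nat.testBit_lt_two_pow hlt] at hbit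
    exact Bool.false_ne_true hbit

lemma testBit_top {n k : ℕ} (hn : 1 ≤ n) (hk1 : 2 ^ (n-1) ≤ k) (hk2 : k < 2 ^ n) :
    k.testBit (n-1) = true := by
  rw [Nat.testBit_eq_decide_div_mod_eq]
  have hdiv : k / 2 ^ (n-1) = 1 := by
    apply Nat.div_eq_of_lt_le
    · simpa using hk1
    · have : 2 * 2 ^ (n-1) = 2 ^ n := by
        rw [← pow_succ']
        congr 1
        omega
      omega
  rw [hdiv]
  decide

end Aux

namespace Aux

lemma Gset_mono {a b : ℕ} (h : a ≤ b) : Gset b ⊆ Gset a :=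
  fun x hx i hi => hx i (lt_of_lt_of_le hi h)

lemma key_decomp (s : ℝ) (n k : ℕ) (x : G) :
    kernelTrunc s n x * walsh k x =
      (∑ j ∈ Finset.range n,
        ((Gset j \ Gset (j+1)).indicator (fun y => (2:ℝ)^(s*(j:ℝ)) * walsh k y)) x)
      + ((Gset n \ {0}).indicator (fun y => (2:ℝ)^(s*(n:ℝ)) * walsh k y)) x := by
  by_cases hxn : x ∈ Gset n
  · have hsum : ∀ j ∈ Finset.range n,
        ((Gset j \ Gset (j+1)).indicator (fun y => (2:ℝ)^(s*(j:ℝ)) * walsh k y)) x = 0 := by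
      intro j hj
      apply Set.indicator_of_notMem
      rintro ⟨-, hnot⟩
      exact hnot (Gset_mono (by simpa using Finset.mem_range.mp hj) hxn)
    rw [Finset.sum_congr rfl hsum, Finset.sum_const_zero, zero_add]
    by_cases hx0 : x = 0
    · rw [Set.indicator_of_notMem (by simp [hx0])]
      simp [kernelTrunc, hx0]
    · rw [Set.indicator_of_mem (show x ∈ Gset n \ {0} from ⟨hxn, by simp [hx0]⟩)]
      simp [kernelTrunc, hx0, hxn]
  · have hx0 : x ≠ 0 := by
      intro h; subst h; exact hxn (fun i _ => rfl)
    have hex : ∃ i, x i ≠ 0 := by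
      by_contra h
      push_neg at h
      exact hxn (fun i _ => h i)
    set j0 := Nat.find hex with hj0
    have hj0n : j0 < n := by
      obtain ⟨i, hi, hxi⟩ : ∃ i, i < n ∧ x i ≠ 0 := by
        by_contra h
        push_neg at h
        exact hxn (fun i hi => h i hi)
      exact lt_of_le_of_lt (Nat.find_le hxi) hi
    have hker : kernelTrunc s n x * walsh k x = (2:ℝ)^(s*(j0:ℝ)) * walsh k x := by
      rw [kernelTrunc, if_neg hx0, if_neg hxn, kernel, dif_pos hex]
    have hmemj0 : x ∈ Gset j0 \ Gset (j0+1) := by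
      constructor
      · intro i hi
        have := Nat.find_min hex hi
        simpa using this
      · intro hmem
        exact (Nat.find_spec hex) (hmem j0 (by omega))
    have hlast : ((Gset n \ {0}).indicator (fun y => (2:ℝ)^(s*(n:ℝ)) * walsh k y)) x = 0 :=
      Set.indicator_of_notMem (fun h => hxn h.1) _
    rw [hlast, add_zero, hker]
    rw [Finset.sum_eq_single j0]
    · exact (Set.indicator_of_mem hmemj0 (fun y => (2:ℝ)^(s*(j0:ℝ)) * walsh k y)).symm
    · intro j hjr hjne
      apply Set.indicator_of_notMem
      rintro ⟨hj1, hj2⟩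
      rcases Nat.lt_or_ge j j0 with h | h
      · exact hj2 (fun i hi => by
          have := Nat.find_min hex (show i < j0 by omega)
          simpa using this)
      · have : j0 < j := by omega
        exact (Nat.find_spec hex) (hj1 j0 this)
    · intro h
      exact absurd (Finset.mem_range.mpr hj0n) h

end Aux

open Aux

/-- For 2^{n-1} ≤ k < 2^n, \hatφ_s^n(k) = 2^{n(s-1)}(1 - 2^{-s}) > 0. -/
theorem stmt7 (s : ℝ) (hs : 0 < s) (hs1 : s < 1)
    (lam : Measure G) [IsProbabilityMeasure lam] [lam.IsAddLeftInvariant]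
    (n k : ℕ) (hn : 1 ≤ n) (hk1 : 2 ^ (n - 1) ≤ k) (hk2 : k < 2 ^ n) :
    phiHatTrunc s n lam k = (2:ℝ) ^ ((n:ℝ) * (s - 1)) * (1 - (2:ℝ) ^ (-s)) ∧
    0 < (2:ℝ) ^ ((n:ℝ) * (s - 1)) * (1 - (2:ℝ) ^ (-s)) := by
  have hpos2 : (0:ℝ) < (2:ℝ) ^ ((n:ℝ) * (s - 1)) := Real.rpow_pos_of_pos (by norm_num) _
  have hlt1 : (2:ℝ) ^ (-s) < 1 := Real.rpow_lt_one_of_one_lt_of_neg (by norm_num) (by linarith)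
  refine ⟨?_, mul_pos hpos2 (by linarith)⟩
  have hbit : k.testBit (n-1) = true := testBit_top hn hk1 hk2
  have hiw : Integrable (walsh k) lam := integrable_walsh k lam
  set A : ℕ → ℝ := fun j => ∫ x in Gset j, walsh k x ∂lam with hA
  have hA0 : ∀ j, j ≤ n-1 → A j = 0 := fun j hj =>
    setIntegral_walsh_zero lam k j (n-1) hj hbit
  have hlamn : (lam (Gset n)).toReal = ((1:ℝ)/2)^n := by
    rw [lam_Gset lam n]
    simp [ENNReal.toReal_pow]
  have hAn : A n = ((1:ℝ)/2)^n := by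
    rw [hA]
    calc ∫ x in Gset n, walsh k x ∂lam = ∫ _ in Gset n, (1:ℝ) ∂lam :=
          setIntegral_congr_fun (measurableSet_Gset n)
            (fun x hx => walsh_eq_one_on_Gset hk2 hx)
      _ = ((1:ℝ)/2)^n := by rw [setIntegral_const, smul_eq_mul, mul_one]; exact hlamn
  have hterm : ∀ j ∈ Finset.range n,
      Integrable ((Gset j \ Gset (j+1)).indicator (fun y => (2:ℝ)^(s*(j:ℝ)) * walsh k y)) lam :=
    fun j _ => (hiw.const_mul _).indicator
      ((measurableSet_Gset j).diff (measurableSet_Gset (j+1)))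
  have hlastint : Integrable
      ((Gset n \ {0}).indicator (fun y => (2:ℝ)^(s*(n:ℝ)) * walsh k y)) lam :=
    (hiw.const_mul _).indicator ((measurableSet_Gset n).diff (measurableSet_singleton 0))
  unfold phiHatTrunc
  simp_rw [key_decomp s n k]
  rw [integral_add (integrable_finset_sum _ hterm) hlastint, integral_finset_sum _ hterm]
  have hterm_eq : ∀ j ∈ Finset.range n,
      ∫ x, ((Gset j \ Gset (j+1)).indicator (fun y => (2:ℝ)^(s*(j:ℝ)) * walsh k y)) x ∂lam
      = (2:ℝ)^(s*(j:ℝ)) * (A j - A (j+1)) := by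
    intro j _
    rw [integral_indicator ((measurableSet_Gset j).diff (measurableSet_Gset (j+1))),
      integral_const_mul,
      integral_diff (measurableSet_Gset (j+1)) hiw.integrableOn
        (Gset_mono (Nat.le_succ j))]
  have hlast_eq :
      ∫ x, ((Gset n \ {0}).indicator (fun y => (2:ℝ)^(s*(n:ℝ)) * walsh k y)) x ∂lam
      = (2:ℝ)^(s*(n:ℝ)) * ((1:ℝ)/2)^n := by
    rw [integral_indicator ((measurableSet_Gset n).diff (measurableSet_singleton 0)),
      integral_const_mul,
      integral_diff (measurableSet_singleton 0) hiw.integrableOn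
        (by intro y hy; rw [Set.mem_singleton_iff] at hy; subst hy; exact fun i _ => rfl),
      Measure.restrict_eq_zero.mpr (lam_singleton_zero lam), integral_zero_measure,
      sub_zero, show (∫ x in Gset n, walsh k x ∂lam) = ((1:ℝ)/2)^n from hAn]
  rw [Finset.sum_congr rfl hterm_eq, hlast_eq]
  have hsum : ∑ j ∈ Finset.range n, (2:ℝ)^(s*(j:ℝ)) * (A j - A (j+1))
      = (2:ℝ)^(s*((n-1:ℕ):ℝ)) * (0 - ((1:ℝ)/2)^n) := by
    rw [Finset.sum_eq_single (n-1)]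
    · rw [hA0 (n-1) le_rfl, show n-1+1 = n by omega, hAn]
    · intro j hjr hjne
      have hjn : j < n := Finset.mem_range.mp hjr
      rw [hA0 j (by omega), hA0 (j+1) (by omega), sub_zero, mul_zero]
    · intro h
      exact absurd (Finset.mem_range.mpr (by omega)) h
  rw [hsum, Nat.cast_sub hn, Nat.cast_one]
  have hhalf : ((1:ℝ)/2)^n = (2:ℝ)^(-(n:ℝ)) := by
    rw [Real.rpow_neg (by norm_num), Real.rpow_natCast, one_div, inv_pow]
  rw [hhalf]
  have e : ∀ a b : ℝ, (2:ℝ)^a * (2:ℝ)^b = (2:ℝ)^(a+b) :=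
    fun a b => (Real.rpow_add (by norm_num) a b).symm
  have l1 : (2:ℝ)^(s*((n:ℝ)-1)) * (2:ℝ)^(-(n:ℝ)) = (2:ℝ)^((n:ℝ)*(s-1) + (-s)) := by
    rw [e]; congr 1; ring
  have l2 : (2:ℝ)^(s*(n:ℝ)) * (2:ℝ)^(-(n:ℝ)) = (2:ℝ)^((n:ℝ)*(s-1)) := by
    rw [e]; congr 1; ring
  have l3 : (2:ℝ)^((n:ℝ)*(s-1)) * (2:ℝ)^(-s) = (2:ℝ)^((n:ℝ)*(s-1) + (-s)) := e _ _
  linear_combination -l1 + l2 + l3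
end

section
/- For each k with 1 ≤ k < 2^n, the Walsh–Fourier coefficient \hatφ_s^n(k) of the truncated s-kernel is strictly positive. -/
open MeasureTheory Filter Topology
open scoped ENNReal Classical

section AuxStmt8

open MeasureTheory Finset

lemma zmod2_cases' : ∀ a : ZMod 2, a = 0 ∨ a = 1 := by decide

lemma measurableSet_Gset' (j : ℕ) : MeasurableSet (Gset j) := by
  have h : Gset j = ⋂ i ∈ Set.Iio j, (fun x : G => x i) ⁻¹' {0} := by
    ext x; simp [Gset]
  rw [h]
  exact MeasurableSet.biInter (Set.to_countable _)
    (fun i _ => measurable_pi_apply i (measurableSet_singleton 0))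

lemma walsh_abs_le' (k : ℕ) (x : G) : |walsh k x| ≤ 1 := by
  unfold walsh
  rw [Finset.abs_prod]
  refine Finset.prod_le_one (fun i _ => abs_nonneg _) (fun i _ => ?_)
  split_ifs <;> norm_num

lemma measurable_walsh' (k : ℕ) : Measurable (walsh k) := by
  unfold walsh
  refine Finset.measurable_prod _ (fun i _ => ?_)
  by_cases hb : k.testBit i
  · simp only [hb, true_and]
    exact Measurable.ite (measurable_pi_apply i (measurableSet_singleton 1))
      measurable_const measurable_const
  · simp [hb]

lemma integrable_walsh' (k : ℕ) (lam : Measure G) [IsProbabilityMeasure lam] :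
    Integrable (walsh k) lam :=
  (integrable_const 1).mono' (measurable_walsh' k).aestronglyMeasurable
    (Filter.Eventually.of_forall fun x => by rw [Real.norm_eq_abs]; exact walsh_abs_le' k x)

lemma walsh_eq_one' {k j : ℕ} (hk : k < 2 ^ j) {x : G} (hx : x ∈ Gset j) : walsh k x = 1 := by
  unfold walsh
  refine Finset.prod_eq_one (fun i _ => ?_)
  rw [if_neg]
  rintro ⟨hb, h1⟩
  have hij : i < j := by
    by_contra h
    push_neg at h
    have hki : k < 2 ^ i := lt_of_lt_of_le hk (Nat.pow_le_pow_right (by norm_num) h)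
    rw [Nat.testBit_lt_two_pow hki] at hb
    simp at hb
  rw [hx i hij] at h1
  exact absurd h1 (by decide)

lemma walsh_add_single' {k i₀ : ℕ} (hb : k.testBit i₀ = true) (x : G) :
    walsh k (Pi.single i₀ 1 + x) = - walsh k x := by
  have h2 : 2 ^ i₀ ≤ k := by
    by_contra h
    push_neg at h
    rw [Nat.testBit_lt_two_pow h] at hb
    simp at hb
  have hik : i₀ ∈ Finset.range k := Finset.mem_range.2 (lt_of_lt_of_le (Nat.lt_two_pow_self (n := i₀)) h2)
  have key : ∀ y : G, walsh k y = (if k.testBit i₀ ∧ y i₀ = 1 then (-1:ℝ) else 1) *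
      ∏ i ∈ (Finset.range k).erase i₀, (if k.testBit i ∧ y i = 1 then (-1:ℝ) else 1) := by
    intro y
    rw [walsh]
    exact (Finset.mul_prod_erase _ _ hik).symm
  rw [key, key x]
  have happ : ∀ i : ℕ, (Pi.single i₀ 1 + x : G) i = (if i = i₀ then 1 else 0) + x i := by
    intro i
    rw [Pi.add_apply, Pi.single_apply]
  have hrest : ∏ i ∈ (Finset.range k).erase i₀,
        (if k.testBit i ∧ (Pi.single i₀ 1 + x : G) i = 1 then (-1:ℝ) else 1)
      = ∏ i ∈ (Finset.range k).erase i₀, (if k.testBit i ∧ x i = 1 then (-1:ℝ) else 1) := by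
    refine Finset.prod_congr rfl (fun i hi => ?_)
    have hne : i ≠ i₀ := Finset.ne_of_mem_erase hi
    rw [happ i, if_neg hne, zero_add]
  rw [hrest]
  have h1 : (Pi.single i₀ 1 + x : G) i₀ = 1 + x i₀ := by rw [happ i₀, if_pos rfl]
  rw [h1]
  rcases zmod2_cases' (x i₀) with h0 | h1'
  · rw [h0, if_pos ⟨hb, by decide⟩, if_neg (by rintro ⟨-, h⟩; exact absurd h (by decide))]
    ring
  · rw [h1', if_neg (by rintro ⟨-, h⟩; exact absurd h (by decide)), if_pos ⟨hb, rfl⟩]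
    ring

lemma Gset_split' (lam : Measure G) [lam.IsAddLeftInvariant] (j : ℕ) :
    lam (Gset j) = lam (Gset (j+1)) + lam (Gset (j+1)) := by
  have happ : ∀ x : G, ∀ i : ℕ, (Pi.single j 1 + x : G) i = (if i = j then 1 else 0) + x i := by
    intro x i
    rw [Pi.add_apply, Pi.single_apply]
  have hBmeas : MeasurableSet ((fun x : G => Pi.single j 1 + x) ⁻¹' (Gset (j+1))) :=
    (measurable_const_add _) (measurableSet_Gset' (j+1))
  have hmem : ∀ x : G, x ∈ ((fun x : G => Pi.single j 1 + x) ⁻¹' (Gset (j+1))) ↔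
      ((∀ i < j, x i = 0) ∧ x j = 1) := by
    intro x
    constructor
    · intro hx
      refine ⟨fun i hi => ?_, ?_⟩
      · have h : (Pi.single j 1 + x : G) i = 0 := hx i (Nat.lt_succ_of_lt hi)
        rw [happ x i, if_neg (Nat.ne_of_lt hi), zero_add] at h
        exact h
      · have h : (Pi.single j 1 + x : G) j = 0 := hx j (Nat.lt_succ_self j)
        rw [happ x j, if_pos rfl] at h
        rcases zmod2_cases' (x j) with h0 | h1
        · rw [h0] at h
          exact absurd h (by decide)
        · exact h1
    · rintro ⟨h0, h1⟩ i hi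
      show (Pi.single j 1 + x : G) i = 0
      rw [happ x i]
      rcases Nat.lt_succ_iff_lt_or_eq.1 hi with hlt | rfl
      · rw [if_neg (Nat.ne_of_lt hlt), zero_add]
        exact h0 i hlt
      · rw [if_pos rfl, h1]
        decide
  have hunion : Gset j = Gset (j+1) ∪ ((fun x : G => Pi.single j 1 + x) ⁻¹' (Gset (j+1))) := by
    ext x
    simp only [Set.mem_union, hmem]
    constructor
    · intro hx
      rcases zmod2_cases' (x j) with h0 | h1
      · left
        intro i hi
        rcases Nat.lt_succ_iff_lt_or_eq.1 hi with hlt | rfl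
        · exact hx i hlt
        · exact h0
      · right
        exact ⟨fun i hi => hx i hi, h1⟩
    · rintro (hx | ⟨h0, _⟩) i hi
      · exact hx i (Nat.lt_succ_of_lt hi)
      · exact h0 i hi
  have hdisj : Disjoint (Gset (j+1)) ((fun x : G => Pi.single j 1 + x) ⁻¹' (Gset (j+1))) := by
    rw [Set.disjoint_left]
    intro x hx hxB
    have h1 := ((hmem x).1 hxB).2
    have h0 := hx j (Nat.lt_succ_self j)
    rw [h0] at h1
    exact absurd h1 (by decide)
  have hBval : lam ((fun x : G => Pi.single j 1 + x) ⁻¹' (Gset (j+1))) = lam (Gset (j+1)) :=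
    measure_preimage_add lam _ _
  rw [hunion, measure_union hdisj hBmeas, hBval]

lemma Gset_ne_zero' (lam : Measure G) [IsProbabilityMeasure lam] [lam.IsAddLeftInvariant]
    (j : ℕ) : lam (Gset j) ≠ 0 := by
  induction j with
  | zero =>
    have h : Gset 0 = Set.univ := by ext x; simp [Gset]
    rw [h, measure_univ]
    exact one_ne_zero
  | succ j ih =>
    intro h
    apply ih
    rw [Gset_split' lam j, h, add_zero]

lemma singleton_zero_null' (lam : Measure G) [IsProbabilityMeasure lam]
    [lam.IsAddLeftInvariant] : lam {(0 : G)} = 0 := by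
  by_contra h
  have hee : ∀ y : G, y + y = 0 := fun y => funext fun i => by
    have h2 : ∀ a : ZMod 2, a + a = 0 := by decide
    exact h2 (y i)
  have hsm : ∀ m : ℕ, lam {(Pi.single m 1 : G)} = lam {(0 : G)} := by
    intro m
    have hpre : (fun x : G => Pi.single m 1 + x) ⁻¹' {(0 : G)} = {(Pi.single m 1 : G)} := by
      ext x
      simp only [Set.mem_preimage, Set.mem_singleton_iff]
      constructor
      · intro hx
        calc x = (Pi.single m 1 + Pi.single m 1) + x := by rw [hee, zero_add]
          _ = Pi.single m 1 + (Pi.single m 1 + x) := add_assoc _ _ _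
          _ = Pi.single m 1 + 0 := by rw [hx]
          _ = Pi.single m 1 := add_zero _
      · rintro rfl
        exact hee _
    rw [← hpre, measure_preimage_add]
  have hU : lam (⋃ m : ℕ, {(Pi.single m 1 : G)}) = ∑' m : ℕ, lam {(Pi.single m 1 : G)} := by
    refine measure_iUnion ?_ (fun m => measurableSet_singleton _)
    intro m m' hmm'
    simp only [Set.disjoint_singleton]
    intro hEq
    apply hmm'
    have h1 := congrFun hEq m
    rw [Pi.single_eq_same] at h1
    by_contra hne
    rw [Pi.single_eq_of_ne hne] at h1
    exact absurd h1 (by decide)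
  have htop : (⊤ : ℝ≥0∞) ≤ 1 := by
    calc (⊤ : ℝ≥0∞) = ∑' _ : ℕ, lam {(0 : G)} :=
          (ENNReal.tsum_const_eq_top_of_ne_zero h).symm
      _ = ∑' m : ℕ, lam {(Pi.single m 1 : G)} := by
          exact tsum_congr fun m => (hsm m).symm
      _ = lam (⋃ m : ℕ, {(Pi.single m 1 : G)}) := hU.symm
      _ ≤ lam Set.univ := measure_mono (Set.subset_univ _)
      _ = 1 := measure_univ
  simp at htop

lemma setIntegral_walsh_zero' (lam : Measure G) [IsProbabilityMeasure lam]
    [lam.IsAddLeftInvariant] {j k : ℕ} (hjk : 2 ^ j ≤ k) :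
    ∫ x in Gset j, walsh k x ∂lam = 0 := by
  have hk0 : k ≠ 0 := by
    have h1 : 1 ≤ 2 ^ j := Nat.one_le_two_pow
    omega
  obtain ⟨i₀, hbit, htop⟩ := Nat.exists_most_significant_bit hk0
  have hji : j ≤ i₀ := by
    by_contra hh
    push_neg at hh
    have hlt : k < 2 ^ j :=
      Nat.lt_pow_two_of_testBit k (fun i hi => htop i (lt_of_lt_of_le hh hi))
    omega
  have happ : ∀ x : G, ∀ i : ℕ, (Pi.single i₀ 1 + x : G) i = (if i = i₀ then 1 else 0) + x i := by
    intro x i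
    rw [Pi.add_apply, Pi.single_apply]
  have hGmem : ∀ x : G, ((Pi.single i₀ 1 + x : G)) ∈ Gset j ↔ x ∈ Gset j := by
    intro x
    constructor
    · intro hx i hi
      have h := hx i hi
      rwa [happ x i, if_neg (by omega : ¬ i = i₀), zero_add] at h
    · intro hx i hi
      show (Pi.single i₀ 1 + x : G) i = 0
      rw [happ x i, if_neg (by omega : ¬ i = i₀), zero_add]
      exact hx i hi
  have hkey : ∀ x : G, (Gset j).indicator (walsh k) (Pi.single i₀ 1 + x) = - (Gset j).indicator (walsh k) x := by
    intro x
    by_cases hx : x ∈ Gset j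
    · rw [Set.indicator_of_mem ((hGmem x).2 hx), Set.indicator_of_mem hx, walsh_add_single' hbit]
    · rw [Set.indicator_of_notMem (fun hc => hx ((hGmem x).1 hc)),
        Set.indicator_of_notMem hx, neg_zero]
  have h1 : ∫ x, (Gset j).indicator (walsh k) x ∂lam
      = ∫ x, (Gset j).indicator (walsh k) (Pi.single i₀ 1 + x) ∂lam :=
    (integral_add_left_eq_self ((Gset j).indicator (walsh k)) (Pi.single i₀ 1)).symm
  have h2 : ∫ x, (Gset j).indicator (walsh k) (Pi.single i₀ 1 + x) ∂lam
      = - ∫ x, (Gset j).indicator (walsh k) x ∂lam := by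
    simp only [hkey]
    exact integral_neg _
  rw [← integral_indicator (measurableSet_Gset' j)]
  linarith [h1, h2]

end AuxStmt8


/-- For 1 ≤ k < 2^n, the Walsh–Fourier coefficient \hatφ_s^n(k) is strictly positive. -/
theorem stmt8 (s : ℝ) (hs : 0 < s) (hs1 : s < 1)
    (lam : Measure G) [IsProbabilityMeasure lam] [lam.IsAddLeftInvariant]
    (n k : ℕ) (hk1 : 1 ≤ k) (hk2 : k < 2 ^ n) :
    0 < phiHatTrunc s n lam k := by
  have hn : 1 ≤ n := by
    rcases Nat.eq_zero_or_pos n with rfl | h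
    · simp at hk2; omega
    · exact h
  set f : ℕ → ℝ := fun j => (2:ℝ) ^ (s * (j:ℝ)) with hf
  have hf0 : f 0 = 1 := by simp [hf]
  -- pointwise identity away from 0
  have hpt : ∀ x : G, x ≠ 0 → kernelTrunc s n x * walsh k x
      = walsh k x + ∑ i ∈ Finset.range n, (f (i+1) - f i) * (Gset (i+1)).indicator (walsh k) x := by
    intro x hx
    have hex : ∃ i, x i ≠ 0 := by
      by_contra hc
      push_neg at hc
      exact hx (funext fun i => hc i)
    set J := Nat.find hex with hJ
    have hxJ : x J ≠ 0 := Nat.find_spec hex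
    have hmem : ∀ j : ℕ, x ∈ Gset j ↔ j ≤ J := by
      intro j
      constructor
      · intro hxj
        by_contra hc
        push_neg at hc
        exact hxJ (hxj J hc)
      · intro hj i hi
        by_contra hne
        exact (Nat.find_min hex (lt_of_lt_of_le hi hj)) hne
    have hindic : ∀ i : ℕ, (Gset (i+1)).indicator (walsh k) x
        = (if i < J then 1 else 0) * walsh k x := by
      intro i
      by_cases hiJ : i < J
      · rw [Set.indicator_of_mem ((hmem (i+1)).2 hiJ), if_pos hiJ, one_mul]
      · rw [Set.indicator_of_notMem (fun hc => hiJ (Nat.lt_of_succ_le ((hmem (i+1)).1 hc))),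
          if_neg hiJ, zero_mul]
    have hfilter : (Finset.range n).filter (fun i => i < J) = Finset.range (min n J) := by
      ext i
      simp only [Finset.mem_filter, Finset.mem_range, lt_min_iff]
    have hsum : ∑ i ∈ Finset.range n, (f (i+1) - f i) * (Gset (i+1)).indicator (walsh k) x
        = (f (min n J) - 1) * walsh k x := by
      calc ∑ i ∈ Finset.range n, (f (i+1) - f i) * (Gset (i+1)).indicator (walsh k) x
          = ∑ i ∈ Finset.range n, (if i < J then (f (i+1) - f i) else 0) * walsh k x := by
            refine Finset.sum_congr rfl (fun i _ => ?_)
            rw [hindic i]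
            split_ifs <;> ring
        _ = (∑ i ∈ Finset.range n, if i < J then (f (i+1) - f i) else 0) * walsh k x := by
            rw [Finset.sum_mul]
        _ = (∑ i ∈ Finset.range (min n J), (f (i+1) - f i)) * walsh k x := by
            rw [← Finset.sum_filter, hfilter]
        _ = (f (min n J) - f 0) * walsh k x := by rw [Finset.sum_range_sub]
        _ = (f (min n J) - 1) * walsh k x := by rw [hf0]
    have hker : kernelTrunc s n x = f (min n J) := by
      unfold kernelTrunc
      rw [if_neg hx]
      by_cases hGn : x ∈ Gset n
      · rw [if_pos hGn, min_eq_left ((hmem n).1 hGn)]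
      · rw [if_neg hGn]
        have hJn : J < n := by
          by_contra hc
          push_neg at hc
          exact hGn ((hmem n).2 hc)
        unfold kernel
        rw [dif_pos hex, min_eq_right (le_of_lt hJn)]
    rw [hker, hsum]
    ring
  have hae : (fun x => kernelTrunc s n x * walsh k x) =ᵐ[lam]
      (fun x => walsh k x
        + ∑ i ∈ Finset.range n, (f (i+1) - f i) * (Gset (i+1)).indicator (walsh k) x) := by
    rw [Filter.EventuallyEq, ae_iff]
    refine measure_mono_null ?_ (singleton_zero_null' lam)
    intro x hx
    simp only [Set.mem_setOf_eq] at hx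
    simp only [Set.mem_singleton_iff]
    by_contra hne
    exact hx (hpt x hne)
  have hint : ∀ i ∈ Finset.range n,
      Integrable (fun x => (f (i+1) - f i) * (Gset (i+1)).indicator (walsh k) x) lam :=
    fun i _ => ((integrable_walsh' k lam).indicator (measurableSet_Gset' (i+1))).const_mul _
  have hw0 : ∫ x, walsh k x ∂lam = 0 := by
    have h := setIntegral_walsh_zero' lam (j := 0) (k := k) (by simpa using hk1)
    have hG0 : Gset 0 = Set.univ := by ext x; simp [Gset]
    rwa [hG0, Measure.restrict_univ] at h
  have hterm : ∀ i : ℕ, ∫ x, (f (i+1) - f i) * (Gset (i+1)).indicator (walsh k) x ∂lam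
      = (f (i+1) - f i) * ∫ x in Gset (i+1), walsh k x ∂lam := by
    intro i
    rw [integral_const_mul, integral_indicator (measurableSet_Gset' (i+1))]
  have hcpos : ∀ i : ℕ, 0 < f (i+1) - f i := by
    intro i
    simp only [hf]
    rw [sub_pos, Real.rpow_lt_rpow_left_iff (by norm_num : (1:ℝ) < 2)]
    have hlt : (i:ℝ) < ((i+1:ℕ):ℝ) := by push_cast; linarith
    exact mul_lt_mul_of_pos_left hlt hs
  have hInn : ∀ i : ℕ, k < 2 ^ (i+1) →
      ∫ x in Gset (i+1), walsh k x ∂lam = (lam (Gset (i+1))).toReal := by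
    intro i hki
    rw [setIntegral_congr_fun (measurableSet_Gset' (i+1)) (fun x hx => walsh_eq_one' hki hx),
      setIntegral_const, smul_eq_mul, mul_one]
    rfl
  unfold phiHatTrunc
  rw [integral_congr_ae hae,
    integral_add (integrable_walsh' k lam) (integrable_finset_sum _ hint),
    integral_finset_sum _ hint, hw0, zero_add]
  refine Finset.sum_pos' (fun i _ => ?_) ⟨n - 1, Finset.mem_range.2 (by omega), ?_⟩
  · rw [hterm i]
    by_cases hki : k < 2 ^ (i+1)
    · rw [hInn i hki]
      exact mul_nonneg (le_of_lt (hcpos i)) ENNReal.toReal_nonneg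
    · push_neg at hki
      rw [setIntegral_walsh_zero' lam hki, mul_zero]
  · have hn1 : n - 1 + 1 = n := by omega
    rw [hterm (n-1), hInn (n-1) (by rw [hn1]; exact hk2)]
    exact mul_pos (hcpos (n-1))
      (ENNReal.toReal_pos (Gset_ne_zero' lam (n-1+1)) (measure_ne_top lam _))
end

section
/- Let μ be a finite nonatomic Borel measure on the Cantor dyadic group and x a point with limsup_{n→∞} μ(K_n(x)) 2^{ns} > 0, where K_n(x) = x + G_n. Then the s-potential Φ_s(x) = ∫_G φ_s(x - y) dμ(y) is infinite. -/
open MeasureTheory Filter Topology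
open scoped ENNReal Classical

/- Auxiliary lemmas -/

lemma measurable_Kset (n : ℕ) (x : G) : MeasurableSet (Kset n x) := by
  have : Kset n x = ⋂ i ∈ Finset.range n, {y : G | y i = x i} := by
    ext y; simp [Kset, Gset, sub_eq_zero, eq_comm]
  rw [this]
  exact MeasurableSet.biInter (Finset.range n).countable_toSet
    (fun i _ => measurableSet_eq_fun (measurable_pi_apply i) measurable_const)

/-- The "shell" K_n(x) \ K_{n+1}(x). -/
def Aset (n : ℕ) (x : G) : Set G := Kset n x \ Kset (n + 1) x

lemma measurable_Aset (n : ℕ) (x : G) : MeasurableSet (Aset n x) :=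
  (measurable_Kset n x).diff (measurable_Kset (n + 1) x)

lemma Kset_antitone {n m : ℕ} (h : n ≤ m) (x : G) : Kset m x ⊆ Kset n x :=
  fun y hy i hi => hy i (lt_of_lt_of_le hi h)

lemma kernel_on_Aset {s : ℝ} {n : ℕ} {x y : G} (hy : y ∈ Aset n x) :
    kernel s (x - y) = (2 : ℝ) ^ (s * (n : ℝ)) := by
  obtain ⟨h1, h2⟩ := hy
  have hzn : (x - y) n ≠ 0 := by
    intro hzn
    exact h2 (fun i hi => by
      rcases Nat.lt_succ_iff_lt_or_eq.mp hi with hi | hi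
      · exact h1 i hi
      · rw [hi]; exact hzn)
  have hex : ∃ i, (x - y) i ≠ 0 := ⟨n, hzn⟩
  rw [kernel, dif_pos hex]
  congr 2
  norm_cast
  rw [Nat.find_eq_iff]
  exact ⟨hzn, fun m hm hmne => hmne (h1 m hm)⟩

lemma Kset_diff_eq (n : ℕ) (x : G) :
    Kset n x \ {x} = ⋃ j, Aset (j + n) x := by
  ext y
  constructor
  · rintro ⟨hy, hyx⟩
    have hx : x - y ≠ 0 := by
      intro h
      exact hyx (by simpa [sub_eq_zero, eq_comm] using h)
    have hex : ∃ i, (x - y) i ≠ 0 := by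
      by_contra h
      push_neg at h
      exact hx (funext h)
    set m := Nat.find hex with hm
    have hmn : n ≤ m := by
      by_contra h
      push_neg at h
      exact Nat.find_spec hex (hy m h)
    refine Set.mem_iUnion.mpr ⟨m - n, ?_⟩
    have hmn' : m - n + n = m := Nat.sub_add_cancel hmn
    rw [hmn']
    refine ⟨fun i hi => ?_, fun hK => ?_⟩
    · by_contra hne
      exact hne (not_not.mp (Nat.find_min hex hi))
    · exact Nat.find_spec hex (hK m (Nat.lt_succ_self m))
  · intro hy
    obtain ⟨j, hj⟩ := Set.mem_iUnion.mp hy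
    refine ⟨Kset_antitone (Nat.le_add_left n j) x hj.1, ?_⟩
    intro hyx
    apply hj.2
    intro i _
    have : x - y = 0 := by
      rw [Set.mem_singleton_iff] at hyx
      rw [hyx, sub_self]
    rw [this]; rfl

lemma Aset_disjoint (x : G) : Pairwise (Function.onFun Disjoint (fun n => Aset n x)) := by
  intro i j hij
  wlog h : i < j generalizing i j
  · exact (this hij.symm (by omega)).symm
  refine Set.disjoint_left.mpr fun y hyi hyj => ?_
  exact hyi.2 (Kset_antitone (by omega : i + 1 ≤ j) x hyj.1)
/-- If limsup μ(K_n(x)) 2^{ns} > 0, then the s-potential of μ at x is infinite. -/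
theorem stmt10 (s : ℝ) (hs : 0 < s) (hs1 : s < 1)
    (μ : Measure G) [IsFiniteMeasure μ] (hna : ∀ x : G, μ {x} = 0) (x : G)
    (hx : 0 < limsup (fun n : ℕ => μ (Kset n x) * ENNReal.ofReal ((2:ℝ) ^ ((n:ℝ) * s))) atTop) :
    potential s μ x = ⊤ := by
  by_contra hpot
  set c : ℕ → ℝ≥0∞ := fun j => ENNReal.ofReal ((2:ℝ) ^ (s * (j:ℝ))) with hc
  set d : ℕ → ℝ≥0∞ := fun j => μ (Aset j x) with hd
  have hmono : Monotone c := by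
    intro n m hnm
    exact ENNReal.ofReal_le_ofReal (Real.rpow_le_rpow_left_iff (by norm_num : (1:ℝ) < 2) |>.mpr
      (mul_le_mul_of_nonneg_left (Nat.cast_le.mpr hnm) hs.le))
  have hAm : ∀ j, MeasurableSet (Aset j x) := fun j => measurable_Aset j x
  have hsum : ∑' j, c j * d j ≤ potential s μ x := by
    have h1 : ∫⁻ y in ⋃ j, Aset j x, ENNReal.ofReal (kernel s (x - y)) ∂μ ≤ potential s μ x :=
      setLIntegral_le_lintegral _ _
    rw [lintegral_iUnion hAm (Aset_disjoint x)] at h1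
    refine le_trans (le_of_eq ?_) h1
    refine tsum_congr fun j => ?_
    rw [setLIntegral_congr_fun (hAm j)
      (fun y hy => congrArg ENNReal.ofReal (kernel_on_Aset (s := s) hy)),
      setLIntegral_const]
  have hS : ∑' j, c j * d j ≠ ⊤ := ne_top_of_le_ne_top hpot hsum
  have hT : Tendsto (fun n => ∑' j, c (j + n) * d (j + n)) atTop (𝓝 0) :=
    ENNReal.tendsto_sum_nat_add _ hS
  have hKn : ∀ n, μ (Kset n x) = ∑' j, d (j + n) := by
    intro n
    have h0 : μ (Kset n x \ {x}) = μ (Kset n x) := measure_diff_null (hna x)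
    rw [← h0, Kset_diff_eq n x,
      measure_iUnion ((Aset_disjoint x).comp_of_injective (fun a b hab => by omega))
      (fun j => hAm _)]
  have hle : ∀ n, μ (Kset n x) * ENNReal.ofReal ((2:ℝ) ^ ((n:ℝ) * s)) ≤
      ∑' j, c (j + n) * d (j + n) := by
    intro n
    have hcn : ENNReal.ofReal ((2:ℝ) ^ ((n:ℝ) * s)) = c n := by rw [hc, mul_comm]
    rw [hcn, hKn, ← ENNReal.tsum_mul_right]
    exact Summable.tsum_le_tsum (fun j => by
      rw [mul_comm]
      exact mul_le_mul' (hmono (Nat.le_add_left n j)) le_rfl)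
      ENNReal.summable ENNReal.summable
  have hls : limsup (fun n : ℕ => μ (Kset n x) * ENNReal.ofReal ((2:ℝ) ^ ((n:ℝ) * s))) atTop ≤
      limsup (fun n => ∑' j, c (j + n) * d (j + n)) atTop :=
    limsup_le_limsup (Filter.Eventually.of_forall hle)
  rw [hT.limsup_eq] at hls
  exact absurd (lt_of_lt_of_le hx hls) (lt_irrefl 0)
end
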